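/- Let Γ=(G,σ) be a weighted signed graph and let f₁, …, f_k : V → ℝ be k nonzero functions with pairwise disjoint supports (supp(f) = {u : f(u) ≠ 0}). Then λ_k(Δ^σ) ≤ 2 max_{1≤i≤k} R^σ_{μ_d}(f_i). -/

import Mathlib

open Finset Real

open scoped Classical

noncomputable section

namespace SignedGraph

variable {N : ℕ}

/-- The degree `d(u) = Σ_v w(u,v)` of a vertex. -/
def deg (w : Fin N → Fin N → ℝ) (u : Fin N) : ℝ := ∑ v, w u v

/-- Hypotheses making `(w, sgn)` a weighted signed graph: `w` is a symmetric nonnegative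
weight function vanishing on the diagonal and `sgn` is a symmetric `±1`-valued signature. -/
structure IsWSG {N : ℕ} (w : Fin N → Fin N → ℝ) (sgn : Fin N → Fin N → ℝ) : Prop where
  w_symm : ∀ u v, w u v = w v u
  w_nonneg : ∀ u v, 0 ≤ w u v
  w_loopless : ∀ u, w u u = 0
  sgn_symm : ∀ u v, sgn u v = sgn v u
  sgn_pm : ∀ u v, sgn u v = 1 ∨ sgn u v = -1

/-- The signature obtained from `sgn` by switching with the function `θ : V → {±1}`. -/
def switchSgn (sgn : Fin N → Fin N → ℝ) (θ : Fin N → ℝ) : Fin N → Fin N → ℝ :=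
  fun u v => θ u * sgn u v * θ v

/-- The signed adjacency matrix `A^σ`, `A^σ_{uv} = σ(u,v) w(u,v)`. -/
def adj (w sgn : Fin N → Fin N → ℝ) : Matrix (Fin N) (Fin N) ℝ :=
  Matrix.of fun u v => sgn u v * w u v

/-- The symmetric form `I - D^{-1/2} A^σ D^{-1/2}` of the signed normalized Laplacian,
whose eigenvalues are those of `Δ^σ = I - D^{-1} A^σ`. -/
def nlapSym (w sgn : Fin N → Fin N → ℝ) : Matrix (Fin N) (Fin N) ℝ :=
  Matrix.of fun u v =>
    (if u = v then (1 : ℝ) else 0) -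
      sgn u v * w u v / (Real.sqrt (deg w u) * Real.sqrt (deg w v))

/-- The signed (Kirchhoff) Laplacian `L^σ = D - A^σ`. -/
def lap (w sgn : Fin N → Fin N → ℝ) : Matrix (Fin N) (Fin N) ℝ :=
  Matrix.diagonal (deg w) - adj w sgn

/-- The nondecreasing enumeration of the eigenvalues (with multiplicity) of a real
symmetric matrix; junk value `0` if the matrix is not symmetric.  `evals M ⟨k-1,_⟩`
is the `k`-th smallest eigenvalue `λ_k(M)`. -/
def evals (M : Matrix (Fin N) (Fin N) ℝ) : Fin N → ℝ :=
  if h : M.IsHermitian then (fun i => h.eigenvalues (Tuple.sort h.eigenvalues i)) else 0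

/-- The signed Rayleigh quotient `R^σ_μ(f)`. -/
def rayleigh (w sgn : Fin N → Fin N → ℝ) (μ : Fin N → ℝ) (f : Fin N → ℝ) : ℝ :=
  ((1 : ℝ) / 2 * ∑ u, ∑ v, w u v * (f u - sgn u v * f v) ^ 2) / (∑ u, μ u * f u ^ 2)

private lemma sq_sum_eq_of_disj {k : ℕ} (t : Fin k → ℝ)
    (h : ∀ i j, i ≠ j → t i * t j = 0) : (∑ i, t i) ^ 2 = ∑ i, t i ^ 2 := by
  rw [sq, Finset.sum_mul_sum]
  refine Finset.sum_congr rfl fun i _ => ?_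
  rw [Finset.sum_eq_single i (fun b _ hb => h i b (Ne.symm hb))
    (fun hi => absurd (Finset.mem_univ i) hi), sq]

private lemma sq_sum_le_two {k : ℕ} (t : Fin k → ℝ) (i₀ j₀ : Fin k)
    (h : ∀ i, t i ≠ 0 → i = i₀ ∨ i = j₀) : (∑ i, t i) ^ 2 ≤ 2 * ∑ i, t i ^ 2 := by
  have hsub : ∑ i, t i = ∑ i ∈ ({i₀, j₀} : Finset (Fin k)), t i := by
    refine (Finset.sum_subset (Finset.subset_univ _) fun x _ hx => ?_).symm
    by_contra hxv
    rcases h x hxv with rfl | rfl <;> simp at hx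
  have hsub2 : ∑ i ∈ ({i₀, j₀} : Finset (Fin k)), t i ^ 2 ≤ ∑ i, t i ^ 2 :=
    Finset.sum_le_sum_of_subset_of_nonneg (Finset.subset_univ _) (fun i _ _ => sq_nonneg _)
  rw [hsub]
  by_cases hij : i₀ = j₀
  · subst hij
    have h1 : ({i₀, i₀} : Finset (Fin k)) = {i₀} := by simp
    rw [h1] at hsub2 ⊢
    rw [Finset.sum_singleton] at hsub2 ⊢
    nlinarith [sq_nonneg (t i₀)]
  · rw [Finset.sum_pair hij] at hsub2 ⊢
    nlinarith [sq_nonneg (t i₀ - t j₀)]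


private lemma sum_swap_mul {m n : ℕ} (x : Fin m → ℝ) (y : Fin m → Fin n → ℝ)
    (z : Fin n → ℝ) :
    ∑ u, (∑ i, x i * y i u) * z u = ∑ i, x i * ∑ u, y i u * z u := by
  calc ∑ u, (∑ i, x i * y i u) * z u
      = ∑ u, ∑ i, x i * (y i u * z u) := by
        refine Finset.sum_congr rfl fun u _ => ?_
        rw [Finset.sum_mul]
        exact Finset.sum_congr rfl fun i _ => by ring
    _ = ∑ i, ∑ u, x i * (y i u * z u) := Finset.sum_comm
    _ = ∑ i, x i * ∑ u, y i u * z u := by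
        refine Finset.sum_congr rfl fun i _ => ?_
        rw [Finset.mul_sum]

private lemma evals_le_aux {N k : ℕ} (hk1 : 1 ≤ k) (hkN : k ≤ N)
    (M : Matrix (Fin N) (Fin N) ℝ) (hM : M.IsHermitian) (G : Fin k → Fin N → ℝ) (c : ℝ)
    (hind : ∀ a : Fin k → ℝ, (∀ u, ∑ j, a j * G j u = 0) → a = 0)
    (hc : ∀ a : Fin k → ℝ,
      ∑ u, (∑ j, a j * G j u) * M.mulVec (fun v => ∑ j, a j * G j v) u ≤
        c * ∑ u, (∑ j, a j * G j u) ^ 2) :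
    evals M ⟨k - 1, Nat.lt_of_lt_of_le (Nat.sub_lt hk1 Nat.one_pos) hkN⟩ ≤ c := by
  set τ := Tuple.sort hM.eigenvalues with hτ
  set B : Fin N → Fin N → ℝ := fun i u => hM.eigenvectorBasis (τ i) u with hBdef
  have hBe : ∀ i u, ∑ v, M u v * B i v = hM.eigenvalues (τ i) * B i u := by
    intro i u
    have h1 := congrFun (hM.mulVec_eigenvectorBasis (τ i)) u
    simpa [Matrix.mulVec, dotProduct, hBdef] using h1
  have hBc : ∀ (x : Fin N → ℝ) (u : Fin N),
      x u = ∑ i, (∑ v, B i v * x v) * B i u := by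
    intro x u
    have h := hM.eigenvectorBasis.sum_repr (WithLp.toLp 2 x : EuclideanSpace ℝ (Fin N))
    have h2 : ∀ i, hM.eigenvectorBasis.repr (WithLp.toLp 2 x : EuclideanSpace ℝ (Fin N)) i
        = ∑ v, hM.eigenvectorBasis i v * x v := by
      intro i
      rw [hM.eigenvectorBasis.repr_apply_apply]
      simp [PiLp.inner_apply, RCLike.inner_apply, mul_comm]
    have h3 : x u = ∑ i, (∑ v, hM.eigenvectorBasis i v * x v) * hM.eigenvectorBasis i u := by
      conv_lhs => rw [show x u = (WithLp.toLp 2 x : EuclideanSpace ℝ (Fin N)) u from rfl, ← h]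
      rw [WithLp.ofLp_sum, Finset.sum_apply]
      refine Finset.sum_congr rfl fun i _ => ?_
      rw [h2]; rfl
    rw [h3, ← Equiv.sum_comp τ
      (fun i => (∑ v, hM.eigenvectorBasis i v * x v) * hM.eigenvectorBasis i u)]
  -- the test-function map
  have hmk : k - 1 < k := by omega
  let T : (Fin k → ℝ) →ₗ[ℝ] (Fin (k - 1) → ℝ) :=
    { toFun := fun a i => ∑ u, B ⟨(i : ℕ), by omega⟩ u * ∑ j, a j * G j u
      map_add' := by
        intro a a'
        funext i
        simp only [Pi.add_apply, add_mul, Finset.sum_add_distrib, mul_add]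
      map_smul' := by
        intro r a
        funext i
        simp only [Pi.smul_apply, smul_eq_mul, RingHom.id_apply, Finset.mul_sum]
        refine Finset.sum_congr rfl fun u _ => Finset.sum_congr rfl fun j _ => by ring }
  have hTnotinj : ¬ Function.Injective T := by
    intro hinj
    have h1 := LinearMap.finrank_le_finrank_of_injective hinj
    rw [Module.finrank_fin_fun, Module.finrank_fin_fun] at h1
    omega
  rw [← LinearMap.ker_eq_bot] at hTnotinj
  obtain ⟨a, haker, ha0⟩ := (Submodule.ne_bot_iff _).mp hTnotinj
  have hTa : T a = 0 := haker
  set g : Fin N → ℝ := fun u => ∑ j, a j * G j u with hgdef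
  set cc : Fin N → ℝ := fun i => ∑ v, B i v * g v with hccdef
  have hclow : ∀ i : Fin N, (i : ℕ) < k - 1 → cc i = 0 := by
    intro i hi
    exact congrFun hTa ⟨(i : ℕ), hi⟩
  have hgne : ∃ u, g u ≠ 0 := by
    by_contra hcon
    push_neg at hcon
    exact ha0 (hind a hcon)
  have hccfold : ∀ i, (∑ v, B i v * g v) = cc i := fun i => rfl
  have hione : ∃ i, cc i ≠ 0 := by
    by_contra hcon
    push_neg at hcon
    obtain ⟨u, hu⟩ := hgne
    refine hu ?_
    rw [hBc g u]
    simp only [hccfold]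
    simp [hcon]
  have hBcg : ∀ u, g u = ∑ i, cc i * B i u := fun u => hBc g u
  have hsum1 : ∑ u, g u ^ 2 = ∑ i, cc i ^ 2 := by
    calc ∑ u, g u ^ 2 = ∑ u, (∑ i, cc i * B i u) * g u := by
          refine Finset.sum_congr rfl fun u _ => ?_
          rw [sq]
          nth_rewrite 1 [hBcg u]
          rfl
      _ = ∑ i, cc i * ∑ u, B i u * g u := sum_swap_mul cc B g
      _ = ∑ i, cc i ^ 2 := by
          refine Finset.sum_congr rfl fun i _ => ?_
          rw [hccfold i, sq]
  have hmg : ∀ u, M.mulVec g u = ∑ i, cc i * (hM.eigenvalues (τ i) * B i u) := by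
    intro u
    show ∑ v, M u v * g v = _
    calc ∑ v, M u v * g v = ∑ v, (∑ i, cc i * B i v) * M u v := by
          refine Finset.sum_congr rfl fun v _ => ?_
          rw [← hBcg v]
          ring
      _ = ∑ i, cc i * ∑ v, B i v * M u v := sum_swap_mul cc B (M u)
      _ = ∑ i, cc i * (hM.eigenvalues (τ i) * B i u) := by
          refine Finset.sum_congr rfl fun i _ => ?_
          congr 1
          rw [← hBe i u]
          exact Finset.sum_congr rfl fun v _ => by ring
  have hsum2 : ∑ u, g u * M.mulVec g u = ∑ i, hM.eigenvalues (τ i) * cc i ^ 2 := by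
    calc ∑ u, g u * M.mulVec g u
        = ∑ u, (∑ i, cc i * hM.eigenvalues (τ i) * B i u) * g u := by
          refine Finset.sum_congr rfl fun u _ => ?_
          rw [hmg u, Finset.mul_sum, Finset.sum_mul]
          exact Finset.sum_congr rfl fun i _ => by ring
      _ = ∑ i, cc i * hM.eigenvalues (τ i) * ∑ u, B i u * g u :=
          sum_swap_mul (fun i => cc i * hM.eigenvalues (τ i)) B g
      _ = ∑ i, hM.eigenvalues (τ i) * cc i ^ 2 := by
          refine Finset.sum_congr rfl fun i _ => ?_
          rw [hccfold i]
          ring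
  set κ : Fin N := ⟨k - 1, by omega⟩ with hκ
  have hmono : ∀ i : Fin N, cc i ≠ 0 → hM.eigenvalues (τ κ) ≤ hM.eigenvalues (τ i) := by
    intro i hi
    have hik : κ ≤ i := by
      rw [Fin.le_def]
      by_contra hlt
      push_neg at hlt
      exact hi (hclow i (by simpa [hκ] using hlt))
    exact Tuple.monotone_sort hM.eigenvalues hik
  have hkey : hM.eigenvalues (τ κ) * ∑ i, cc i ^ 2 ≤ ∑ i, hM.eigenvalues (τ i) * cc i ^ 2 := by
    rw [Finset.mul_sum]
    refine Finset.sum_le_sum fun i _ => ?_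
    by_cases hi : cc i = 0
    · simp [hi]
    · exact mul_le_mul_of_nonneg_right (hmono i hi) (sq_nonneg _)
  have hpos : 0 < ∑ i, cc i ^ 2 := by
    obtain ⟨i, hi⟩ := hione
    exact Finset.sum_pos' (fun j _ => sq_nonneg _) ⟨i, Finset.mem_univ i, by positivity⟩
  have hfin : hM.eigenvalues (τ κ) ≤ c := by
    have h1 := hc a
    rw [show (fun v => ∑ j, a j * G j v) = g from rfl] at h1
    rw [hsum2, hsum1] at h1
    have h2 : hM.eigenvalues (τ κ) * ∑ i, cc i ^ 2 ≤ c * ∑ i, cc i ^ 2 :=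
      le_trans hkey h1
    exact le_of_mul_le_mul_right h2 hpos
  rw [evals, dif_pos hM]
  exact hfin

private lemma dirichlet_identity {N : ℕ} (w sgn : Fin N → Fin N → ℝ) (hG : IsWSG w sgn)
    (h : Fin N → ℝ) :
    ∑ u, deg w u * h u ^ 2 - ∑ u, ∑ v, sgn u v * w u v * h u * h v
      = 1 / 2 * ∑ u, ∑ v, w u v * (h u - sgn u v * h v) ^ 2 := by
  have hsgn2 : ∀ u v, sgn u v ^ 2 = 1 := fun u v => by
    rcases hG.sgn_pm u v with h1 | h1 <;> rw [h1] <;> norm_num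
  have e1 : ∀ u v, w u v * (h u - sgn u v * h v) ^ 2
      = w u v * h u ^ 2 + w u v * h v ^ 2 - 2 * (sgn u v * w u v * h u * h v) := by
    intro u v
    linear_combination (w u v * h v ^ 2) * hsgn2 u v
  have hA : ∑ u, ∑ v, w u v * h u ^ 2 = ∑ u, deg w u * h u ^ 2 := by
    refine Finset.sum_congr rfl fun u _ => ?_
    rw [← Finset.sum_mul, deg]
  have hB : ∑ u, ∑ v, w u v * h v ^ 2 = ∑ u, deg w u * h u ^ 2 := by
    rw [Finset.sum_comm]
    refine Finset.sum_congr rfl fun v _ => ?_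
    rw [← Finset.sum_mul]
    congr 1
    rw [deg]
    exact Finset.sum_congr rfl fun u _ => hG.w_symm u v
  have e2 : ∑ u, ∑ v, w u v * (h u - sgn u v * h v) ^ 2
      = ∑ u, ∑ v, (w u v * h u ^ 2 + w u v * h v ^ 2
          - 2 * (sgn u v * w u v * h u * h v)) :=
    Finset.sum_congr rfl fun u _ => Finset.sum_congr rfl fun v _ => e1 u v
  rw [e2]
  simp only [Finset.sum_add_distrib, Finset.sum_sub_distrib, ← Finset.mul_sum]
  rw [hA, hB]
  ring

/-- For `k` nonzero functions with pairwise disjoint supports,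
`λ_k(Δ^σ) ≤ 2 max_{1≤i≤k} R^σ_{μ_d}(f_i)`. -/
theorem eigenvalue_le_of_disjoint_supports {N k : ℕ} (w sgn : Fin N → Fin N → ℝ)
    (hG : IsWSG w sgn) (hd : ∀ u, 0 < deg w u) (hk1 : 1 ≤ k) (hk2 : k ≤ N)
    (f : Fin k → Fin N → ℝ) (hne : ∀ i, f i ≠ 0)
    (hdisj : ∀ i j, i ≠ j → ∀ u, f i u = 0 ∨ f j u = 0) :
    evals (nlapSym w sgn) ⟨k - 1, by omega⟩ ≤
      2 * ⨆ i, rayleigh w sgn (deg w) (f i) := by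
  classical
  set M := nlapSym w sgn with hMdef
  have hsd : ∀ u, (0 : ℝ) < Real.sqrt (deg w u) := fun u => Real.sqrt_pos.mpr (hd u)
  have hsqd : ∀ u, Real.sqrt (deg w u) * Real.sqrt (deg w u) = deg w u :=
    fun u => Real.mul_self_sqrt (hd u).le
  have hM : M.IsHermitian := by
    show M.conjTranspose = M
    ext u v
    simp only [Matrix.conjTranspose_apply, star_trivial, hMdef, nlapSym, Matrix.of_apply]
    rw [hG.w_symm v u, hG.sgn_symm v u, mul_comm (Real.sqrt (deg w v))]
    congr 1
    exact if_congr eq_comm rfl rfl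
  have hR : ∀ i, rayleigh w sgn (deg w) (f i) ≤ ⨆ j, rayleigh w sgn (deg w) (f j) :=
    fun i => le_ciSup (f := fun j => rayleigh w sgn (deg w) (f j))
      (Set.Finite.bddAbove (Set.finite_range _)) i
  set Q : Fin k → ℝ :=
    fun i => (1 : ℝ) / 2 * ∑ u, ∑ v, w u v * (f i u - sgn u v * f i v) ^ 2 with hQdef
  set S : Fin k → ℝ := fun i => ∑ u, deg w u * f i u ^ 2 with hSdef
  have hSpos : ∀ i, 0 < S i := by
    intro i
    obtain ⟨u, hu⟩ := Function.ne_iff.mp (hne i)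
    exact Finset.sum_pos' (fun u _ => mul_nonneg (hd u).le (sq_nonneg _))
      ⟨u, Finset.mem_univ u,
        mul_pos (hd u) ((sq_nonneg _).lt_of_ne (Ne.symm (pow_ne_zero 2 hu)))⟩
  have hQle : ∀ i, Q i ≤ (⨆ j, rayleigh w sgn (deg w) (f j)) * S i := by
    intro i
    have h1 : rayleigh w sgn (deg w) (f i) = Q i / S i := rfl
    have h2 : Q i = rayleigh w sgn (deg w) (f i) * S i := by
      rw [h1, div_mul_cancel₀]
      exact (hSpos i).ne'
    rw [h2]
    exact mul_le_mul_of_nonneg_right (hR i) (hSpos i).le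
  refine evals_le_aux hk1 hk2 M hM (fun i u => Real.sqrt (deg w u) * f i u) _ ?_ ?_
  · -- linear independence
    intro a ha
    funext j
    obtain ⟨u, hu⟩ := Function.ne_iff.mp (hne j)
    have h1 := ha u
    rw [Finset.sum_eq_single j] at h1
    · rcases mul_eq_zero.mp h1 with h | h
      · exact h
      · exact absurd h (mul_ne_zero (hsd u).ne' hu)
    · intro b _ hb
      rcases hdisj b j hb u with h | h
      · simp [h]
      · exact absurd h hu
    · intro hj
      exact absurd (Finset.mem_univ j) hj
  · -- the Rayleigh quotient bound
    intro a
    show ∑ u, (∑ j, a j * (Real.sqrt (deg w u) * f j u)) *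
        M.mulVec (fun v => ∑ j, a j * (Real.sqrt (deg w v) * f j v)) u ≤
      (2 * ⨆ i, rayleigh w sgn (deg w) (f i)) *
        ∑ u, (∑ j, a j * (Real.sqrt (deg w u) * f j u)) ^ 2
    set h : Fin N → ℝ := fun u => ∑ j, a j * f j u with hhdef
    have hgu : ∀ u, ∑ j, a j * (Real.sqrt (deg w u) * f j u)
        = Real.sqrt (deg w u) * h u := by
      intro u
      simp only [hhdef]
      rw [Finset.mul_sum]
      exact Finset.sum_congr rfl fun j _ => by ring
    have hsq2 : ∀ u, h u ^ 2 = ∑ i, (a i * f i u) ^ 2 := by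
      intro u
      have h0 := sq_sum_eq_of_disj (fun i => a i * f i u) (fun i j hij => by
        show a i * f i u * (a j * f j u) = 0
        rcases hdisj i j hij u with h0 | h0
        · rw [h0]; ring
        · rw [h0]; ring)
      simp only [hhdef]
      exact h0
    have hPoint : ∀ u v, w u v * (h u - sgn u v * h v) ^ 2
        ≤ 2 * ∑ i, a i ^ 2 * (w u v * (f i u - sgn u v * f i v) ^ 2) := by
      intro u v
      have hex : ∀ x : Fin N, ∃ i₀ : Fin k, ∀ i, f i x ≠ 0 → i = i₀ := by
        intro x
        by_cases hx : ∃ i, f i x ≠ 0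
        · obtain ⟨i₀, h0⟩ := hx
          refine ⟨i₀, fun i hi => ?_⟩
          by_contra hne2
          rcases hdisj i i₀ hne2 x with h3 | h3
          · exact hi h3
          · exact h0 h3
        · push_neg at hx
          exact ⟨⟨0, hk1⟩, fun i hi => absurd (hx i) hi⟩
      obtain ⟨i₀, hi₀⟩ := hex u
      obtain ⟨j₀, hj₀⟩ := hex v
      have hA := sq_sum_le_two (fun i => a i * (f i u - sgn u v * f i v)) i₀ j₀ (by
        intro i hti
        have hti' : a i * (f i u - sgn u v * f i v) ≠ 0 := hti
        by_cases hfu : f i u ≠ 0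
        · exact Or.inl (hi₀ i hfu)
        · push_neg at hfu
          refine Or.inr (hj₀ i fun hfv => ?_)
          exact hti' (by rw [hfu, hfv]; ring))
      have hsum : ∑ i, a i * (f i u - sgn u v * f i v) = h u - sgn u v * h v := by
        simp only [hhdef]
        rw [Finset.mul_sum, ← Finset.sum_sub_distrib]
        exact Finset.sum_congr rfl fun i _ => by ring
      rw [← hsum]
      calc w u v * (∑ i, a i * (f i u - sgn u v * f i v)) ^ 2
          ≤ w u v * (2 * ∑ i, (a i * (f i u - sgn u v * f i v)) ^ 2) :=
            mul_le_mul_of_nonneg_left hA (hG.w_nonneg u v)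
        _ = 2 * ∑ i, a i ^ 2 * (w u v * (f i u - sgn u v * f i v) ^ 2) := by
            rw [Finset.mul_sum, Finset.mul_sum, Finset.mul_sum]
            exact Finset.sum_congr rfl fun i _ => by ring
    have hmv : ∀ u, M.mulVec (fun v => ∑ j, a j * (Real.sqrt (deg w v) * f j v)) u
        = ∑ v, M u v * (Real.sqrt (deg w v) * h v) := by
      intro u
      show ∑ v, M u v * _ = _
      exact Finset.sum_congr rfl fun v _ => by rw [hgu v]
    have hLHS : ∑ u, (∑ j, a j * (Real.sqrt (deg w u) * f j u)) *
        M.mulVec (fun v => ∑ j, a j * (Real.sqrt (deg w v) * f j v)) u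
        = ∑ u, deg w u * h u ^ 2 - ∑ u, ∑ v, sgn u v * w u v * h u * h v := by
      calc ∑ u, (∑ j, a j * (Real.sqrt (deg w u) * f j u)) *
            M.mulVec (fun v => ∑ j, a j * (Real.sqrt (deg w v) * f j v)) u
          = ∑ u, ∑ v, M u v * (Real.sqrt (deg w u) * h u * (Real.sqrt (deg w v) * h v)) := by
            refine Finset.sum_congr rfl fun u _ => ?_
            rw [hgu u, hmv u, Finset.mul_sum]
            exact Finset.sum_congr rfl fun v _ => by ring
        _ = ∑ u, ∑ v, ((if u = v then deg w u * h u ^ 2 else 0)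
              - sgn u v * w u v * h u * h v) := by
            refine Finset.sum_congr rfl fun u _ => Finset.sum_congr rfl fun v _ => ?_
            by_cases huv : u = v
            · subst huv
              have hMuu : M u u = 1 := by
                simp [hMdef, nlapSym, hG.w_loopless u]
              rw [hMuu, if_pos rfl, hG.w_loopless u]
              linear_combination (h u * h u) * hsqd u
            · have hMuv : M u v = - (sgn u v * w u v /
                  (Real.sqrt (deg w u) * Real.sqrt (deg w v))) := by
                simp [hMdef, nlapSym, huv]
              rw [hMuv, if_neg huv]
              field_simp [(hsd u).ne', (hsd v).ne']
              ring
        _ = ∑ u, deg w u * h u ^ 2 - ∑ u, ∑ v, sgn u v * w u v * h u * h v := by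
            simp only [Finset.sum_sub_distrib]
            congr 1
            refine Finset.sum_congr rfl fun u _ => ?_
            simp [Finset.sum_ite_eq]
    have hg2 : ∑ u, (∑ j, a j * (Real.sqrt (deg w u) * f j u)) ^ 2
        = ∑ i, a i ^ 2 * S i := by
      calc ∑ u, (∑ j, a j * (Real.sqrt (deg w u) * f j u)) ^ 2
          = ∑ u, deg w u * h u ^ 2 := by
            refine Finset.sum_congr rfl fun u _ => ?_
            rw [hgu u, mul_pow, Real.sq_sqrt (hd u).le]
        _ = ∑ u, ∑ i, deg w u * (a i * f i u) ^ 2 := by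
            refine Finset.sum_congr rfl fun u _ => ?_
            rw [hsq2 u, Finset.mul_sum]
        _ = ∑ i, a i ^ 2 * S i := by
            rw [Finset.sum_comm]
            refine Finset.sum_congr rfl fun i _ => ?_
            simp only [hSdef]
            rw [Finset.mul_sum]
            exact Finset.sum_congr rfl fun u _ => by ring
    rw [hLHS, hg2, dirichlet_identity w sgn hG h]
    calc 1 / 2 * ∑ u, ∑ v, w u v * (h u - sgn u v * h v) ^ 2
        ≤ 1 / 2 * ∑ u, ∑ v,
            (2 * ∑ i, a i ^ 2 * (w u v * (f i u - sgn u v * f i v) ^ 2)) := by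
          refine mul_le_mul_of_nonneg_left ?_ (by norm_num)
          exact Finset.sum_le_sum fun u _ => Finset.sum_le_sum fun v _ => hPoint u v
      _ = ∑ u, ∑ v, ∑ i, a i ^ 2 * (w u v * (f i u - sgn u v * f i v) ^ 2) := by
          rw [Finset.mul_sum]
          refine Finset.sum_congr rfl fun u _ => ?_
          rw [Finset.mul_sum]
          exact Finset.sum_congr rfl fun v _ => by ring
      _ = ∑ i, ∑ u, ∑ v, a i ^ 2 * (w u v * (f i u - sgn u v * f i v) ^ 2) := by
          rw [show (∑ u, ∑ v, ∑ i, a i ^ 2 * (w u v * (f i u - sgn u v * f i v) ^ 2))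
              = ∑ u, ∑ i, ∑ v, a i ^ 2 * (w u v * (f i u - sgn u v * f i v) ^ 2) from
            Finset.sum_congr rfl fun u _ => Finset.sum_comm]
          exact Finset.sum_comm
      _ = ∑ i, a i ^ 2 * (2 * Q i) := by
          refine Finset.sum_congr rfl fun i _ => ?_
          simp only [hQdef]
          rw [show a i ^ 2 * (2 * (1 / 2 *
              ∑ u, ∑ v, w u v * (f i u - sgn u v * f i v) ^ 2))
            = a i ^ 2 * ∑ u, ∑ v, w u v * (f i u - sgn u v * f i v) ^ 2 from by ring]
          rw [Finset.mul_sum]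
          refine Finset.sum_congr rfl fun u _ => ?_
          rw [Finset.mul_sum]
      _ ≤ ∑ i, a i ^ 2 * (2 * ((⨆ j, rayleigh w sgn (deg w) (f j)) * S i)) := by
          refine Finset.sum_le_sum fun i _ => ?_
          refine mul_le_mul_of_nonneg_left ?_ (sq_nonneg _)
          linarith [hQle i]
      _ = (2 * ⨆ i, rayleigh w sgn (deg w) (f i)) * ∑ i, a i ^ 2 * S i := by
          rw [Finset.mul_sum]
          exact Finset.sum_congr rfl fun i _ => by ring

end SignedGraph
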